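/- Let H be a real inner product space with bilinear forms t, s : H × H → ℝ satisfying ‖u‖² ≤ t(u,u) and s(u,v) ≤ ρ‖u‖‖v‖ with 0 ≤ ρ < 1. Suppose R₀ : H → H is a linear map such that t(R₀v + v, w) = s(v, w) for all v, w ∈ H. Then for every v ∈ H, ‖v‖ ≤ ‖R₀v‖/(1−ρ). -/
import Mathlib


/-- Quantitative lower bound for the linearized preconditioned residual operator
(equation (3.3)): if `t (R₀ v + v) w = s v w` for all `v, w`, then
`‖v‖ ≤ ‖R₀ v‖ / (1 - ρ)`. -/
theorem error_bounded_by_residual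
    {H : Type*} [NormedAddCommGroup H] [InnerProductSpace ℝ H]
    (t s : H →ₗ[ℝ] H →ₗ[ℝ] ℝ) (ρ : ℝ) (hρ0 : 0 ≤ ρ) (hρ1 : ρ < 1)
    (ht : ∀ u : H, ‖u‖ ^ 2 ≤ t u u)
    (hs : ∀ u v : H, s u v ≤ ρ * ‖u‖ * ‖v‖)
    (R₀ : H →ₗ[ℝ] H)
    (hR : ∀ v w : H, t (R₀ v + v) w = s v w) :
    ∀ v : H, ‖v‖ ≤ ‖R₀ v‖ / (1 - ρ) := by
  intro v
  set u : H := R₀ v + v with hu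
  have h1 : ‖u‖ ^ 2 ≤ ρ * ‖v‖ * ‖u‖ := by
    calc ‖u‖ ^ 2 ≤ t u u := ht u
    _ = s v u := hR v u
    _ ≤ ρ * ‖v‖ * ‖u‖ := hs v u
  have h2 : ‖u‖ ≤ ρ * ‖v‖ := by
    rcases eq_or_lt_of_le (norm_nonneg u) with h | h
    · rw [← h]; positivity
    · nlinarith [h1]
  have h3 : ‖v‖ ≤ ‖u‖ + ‖R₀ v‖ := by
    have : v = u - R₀ v := by rw [hu]; abel
    calc ‖v‖ = ‖u - R₀ v‖ := by rw [← this]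
    _ ≤ ‖u‖ + ‖R₀ v‖ := norm_sub_le _ _
  rw [le_div_iff₀ (by linarith)]
  nlinarith [norm_nonneg (R₀ v)]
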